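/- Let G be a group with a finite generating set X having the loop shortening property with constant k > 0. Then G is finitely presented; in fact G admits the finite presentation ⟨X | R⟩ where R is the (finite) set of all words r over X ∪ X⁻¹ with |r| ≤ 2k+2 that represent the identity of G. -/

import Mathlib

/-! Basic notions for a group `G` with a generating set `X`:
words over `X ∪ X⁻¹`, the word metric, paths, loops and fellow traveling. -/

namespace LoopShortening

variable {G : Type*} [Group G]

/-- `w` is a word over `X ∪ X⁻¹`: every letter of `w` lies in `X ∪ X⁻¹`. -/
def IsWord (X : Set G) (w : List G) : Prop := ∀ x ∈ w, x ∈ X ∨ x⁻¹ ∈ X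

/-- The word metric with respect to `X`: `wdist X g h` is the least `n` such that
`g⁻¹h` is a product of `n` elements of `X ∪ X⁻¹`. -/
noncomputable def wdist (X : Set G) (g h : G) : ℕ :=
  sInf {n : ℕ | ∃ l : List G, IsWord X l ∧ l.length = n ∧ g * l.prod = h}

/-- The point at time `t ∈ ℕ` along the path based at `g₀` labelled by the word `w`;
for `t ≥ |w|` this is the endpoint of the path. -/
def pathAt (g₀ : G) (w : List G) (t : ℕ) : G := g₀ * (w.take t).prod

/-- The word `w` labels a loop (its evaluation in `G` is the identity, so the
path it labels ends where it starts). -/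
def IsLoop (w : List G) : Prop := w.prod = 1

/-- The paths based at `g₀` and `h₀` labelled by `w` and `u` synchronously
`k`-fellow travel. -/
def SyncFellow (X : Set G) (k : ℕ) (g₀ : G) (w : List G) (h₀ : G) (u : List G) : Prop :=
  ∀ t : ℕ, wdist X (pathAt g₀ w t) (pathAt h₀ u t) ≤ k

/-- The paths based at `g₀` and `h₀` labelled by `w` and `u` asynchronously
`k`-fellow travel: there is a nondecreasing unbounded reparameterization `φ`. -/
def AsyncFellow (X : Set G) (k : ℕ) (g₀ : G) (w : List G) (h₀ : G) (u : List G) : Prop :=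
  ∃ φ : ℕ → ℕ, Monotone φ ∧ (∀ m : ℕ, ∃ t : ℕ, m ≤ φ t) ∧
    ∀ t : ℕ, wdist X (pathAt g₀ w t) (pathAt h₀ u (φ t)) ≤ k

/-- The letter map from formal letters to `G`. -/
def lspToG (X : Set G) : X × Bool → G := fun p => cond p.2 (p.1 : G) (p.1 : G)⁻¹

lemma lsp_ev_mk (X : Set G) (l : List (X × Bool)) :
    FreeGroup.lift (fun x : X => (x : G)) (FreeGroup.mk l) = (l.map (lspToG X)).prod :=
  FreeGroup.lift_mk

lemma lsp_isWord (X : Set G) (l : List (X × Bool)) : IsWord X (l.map (lspToG X)) := by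
  intro x hx
  simp only [List.mem_map] at hx
  obtain ⟨p, -, rfl⟩ := hx
  rcases p with ⟨x, b⟩
  cases b
  · right; simp [lspToG]
  · left; simp [lspToG]

lemma lsp_exists_lift (X : Set G) : ∀ w : List G, IsWord X w →
    ∃ l : List (X × Bool), l.map (lspToG X) = w
  | [], _ => ⟨[], rfl⟩
  | (g :: w), h => by
    obtain ⟨l, hl⟩ := lsp_exists_lift X w (fun x hx => h x (List.mem_cons_of_mem _ hx))
    rcases h g (List.mem_cons_self) with hg | hg
    · exact ⟨(⟨g, hg⟩, true) :: l, by simp [lspToG, hl]⟩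
    · exact ⟨(⟨g⁻¹, hg⟩, false) :: l, by simp [lspToG, hl]⟩

lemma lsp_wdist_le (X : Set G) (hgen : Subgroup.closure X = ⊤) {g h : G} {m : ℕ}
    (hle : wdist X g h ≤ m) :
    ∃ l : List (X × Bool), l.length ≤ m ∧
      FreeGroup.lift (fun x : X => (x : G)) (FreeGroup.mk l) = g⁻¹ * h := by
  have hmem : g⁻¹ * h ∈ Submonoid.closure (X ∪ X⁻¹) := by
    rw [← Subgroup.closure_toSubmonoid]
    simp [hgen]
  obtain ⟨l0, hl0, hprod0⟩ := Submonoid.exists_list_of_mem_closure hmem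
  have hw0 : IsWord X l0 := by
    intro x hx
    rcases hl0 x hx with h1 | h1
    · exact Or.inl h1
    · exact Or.inr (by simpa using h1)
  have hne : {n : ℕ | ∃ l : List G, IsWord X l ∧ l.length = n ∧ g * l.prod = h}.Nonempty :=
    ⟨l0.length, l0, hw0, rfl, by rw [hprod0]; group⟩
  obtain ⟨l, hwl, hlen, hprod⟩ := Nat.sInf_mem hne
  obtain ⟨l', hl'⟩ := lsp_exists_lift X l hwl
  refine ⟨l', ?_, ?_⟩
  · have : l'.length = l.length := by rw [← hl']; simp
    rw [this, hlen]; exact hle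
  · rw [lsp_ev_mk, hl']
    rw [← hprod]; group

/-- Key lemma: any word over `X ∪ X⁻¹` representing `1` lies in any normal subgroup
containing all short relators. -/
lemma lsp_key (X : Set G) (hgen : Subgroup.closure X = ⊤) (k : ℕ)
    (hLSP : ∀ (g₀ : G) (w : List G), IsWord X w → IsLoop w → w ≠ [] →
      ∃ (h₀ : G) (u : List G), IsWord X u ∧ IsLoop u ∧ u.length < w.length ∧
        SyncFellow X k g₀ w h₀ u)
    (N : Subgroup (FreeGroup X)) (hNn : N.Normal)
    (hN : ∀ lr : List (X × Bool), lr.length ≤ 2 * k + 2 →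
      FreeGroup.lift (fun x : X => (x : G)) (FreeGroup.mk lr) = 1 → FreeGroup.mk lr ∈ N) :
    ∀ (n : ℕ) (l : List (X × Bool)), l.length ≤ n → (l.map (lspToG X)).prod = 1 →
      FreeGroup.mk l ∈ N := by
  intro n
  induction n with
  | zero =>
    intro l hl _
    have : l = [] := List.length_eq_zero_iff.mp (Nat.le_zero.mp hl)
    subst this
    rw [← FreeGroup.one_eq_mk]
    exact one_mem N
  | succ n ih =>
    intro l hl hprod
    rcases eq_or_ne l [] with rfl | hne
    · rw [← FreeGroup.one_eq_mk]; exact one_mem N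
    set w : List G := l.map (lspToG X) with hw
    have hwne : w ≠ [] := by simpa [hw] using hne
    obtain ⟨h₀, u, hu, huloop, hulen, hsync⟩ :=
      hLSP 1 w (lsp_isWord X l) hprod hwne
    obtain ⟨l', hl'⟩ := lsp_exists_lift X u hu
    have hl'len : l'.length = u.length := by rw [← hl']; simp
    have hwlen : w.length = l.length := by simp [hw]
    -- choose the rungs
    choose P hPlen hPev using fun t => lsp_wdist_le X hgen (hsync t)
    -- pathAt step lemmas
    have hstepw : ∀ t : ℕ, (ht : t < l.length) →
        pathAt 1 w (t + 1) = pathAt 1 w t * lspToG X (l[t]'ht) := by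
      intro t ht
      have h1 : w[t]? = some (lspToG X (l[t]'ht)) := by
        rw [hw, List.getElem?_map, List.getElem?_eq_getElem ht]
        rfl
      have h2 : w.take (t + 1) = w.take t ++ [lspToG X (l[t]'ht)] := by
        rw [List.take_succ, h1]
        rfl
      simp [pathAt, h2, mul_assoc]
    -- telescoping
    have main : ∀ t : ℕ, t ≤ l.length →
        FreeGroup.mk (l.take t) * FreeGroup.mk (P t) * (FreeGroup.mk (l'.take t))⁻¹ *
          (FreeGroup.mk (P 0))⁻¹ ∈ N := by
      intro t
      induction t with
      | zero =>
        intro _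
        simp only [List.take_zero, ← FreeGroup.one_eq_mk]
        have : (1 : FreeGroup X) * FreeGroup.mk (P 0) * (1 : FreeGroup X)⁻¹ *
            (FreeGroup.mk (P 0))⁻¹ = 1 := by group
        rw [this]; exact one_mem N
      | succ t iht =>
        intro ht
        have ht' : t < l.length := by omega
        have hZ := iht (by omega)
        -- the current letters
        set a : List (X × Bool) := [l[t]'ht'] with ha
        set b : List (X × Bool) := (l'[t]?).toList with hb
        have htakel : l.take (t + 1) = l.take t ++ a := by
          rw [List.take_succ, List.getElem?_eq_getElem ht']
          rfl
        have htakel' : l'.take (t + 1) = l'.take t ++ b := List.take_succ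
        -- the rectangle relator
        set r : List (X × Bool) :=
          a ++ P (t + 1) ++ FreeGroup.invRev b ++ FreeGroup.invRev (P t) with hr
        have hrlen : r.length ≤ 2 * k + 2 := by
          have hb1 : b.length ≤ 1 := by
            rw [hb]; cases l'[t]? <;> simp
          have := hPlen t
          have := hPlen (t + 1)
          simp only [hr, List.length_append, FreeGroup.invRev_length, ha,
            List.length_singleton]
          omega
        have hrmk : FreeGroup.mk r = FreeGroup.mk a * FreeGroup.mk (P (t + 1)) *
            (FreeGroup.mk b)⁻¹ * (FreeGroup.mk (P t))⁻¹ := by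
          rw [FreeGroup.inv_mk, FreeGroup.inv_mk, FreeGroup.mul_mk, FreeGroup.mul_mk,
            FreeGroup.mul_mk, hr]
        -- evaluate the letters
        have heva : FreeGroup.lift (fun x : X => (x : G)) (FreeGroup.mk a)
            = lspToG X (l[t]'ht') := by
          rw [lsp_ev_mk, ha]
          simp
        have hevb : pathAt h₀ u (t + 1)
            = pathAt h₀ u t * FreeGroup.lift (fun x : X => (x : G)) (FreeGroup.mk b) := by
          rw [lsp_ev_mk]
          have hmapb : b.map (lspToG X) = (u[t]?).toList := by
            rw [hb, ← hl', List.getElem?_map]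
            cases l'[t]? <;> simp
          have : u.take (t + 1) = u.take t ++ (u[t]?).toList := List.take_succ
          simp [pathAt, this, hmapb, mul_assoc]
        have hevr : FreeGroup.lift (fun x : X => (x : G)) (FreeGroup.mk r) = 1 := by
          rw [hrmk]
          simp only [map_mul, map_inv]
          rw [heva, hPev t, hPev (t + 1), hstepw t ht']
          rw [hevb]
          group
        have hrN : FreeGroup.mk r ∈ N := hN r hrlen hevr
        -- combine
        have key : FreeGroup.mk (l.take (t + 1)) * FreeGroup.mk (P (t + 1)) *
            (FreeGroup.mk (l'.take (t + 1)))⁻¹ * (FreeGroup.mk (P 0))⁻¹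
            = (FreeGroup.mk (l.take t) * FreeGroup.mk r * (FreeGroup.mk (l.take t))⁻¹) *
              (FreeGroup.mk (l.take t) * FreeGroup.mk (P t) *
                (FreeGroup.mk (l'.take t))⁻¹ * (FreeGroup.mk (P 0))⁻¹) := by
          rw [htakel, htakel', ← FreeGroup.mul_mk, ← FreeGroup.mul_mk, hrmk]
          group
        rw [key]
        exact mul_mem (hNn.conj_mem _ hrN _) hZ
    have hZ := main l.length le_rfl
    rw [List.take_length] at hZ
    have htakel' : l'.take l.length = l' := by
      apply List.take_of_length_le
      omega
    rw [htakel'] at hZ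
    -- mk l' ∈ N by induction hypothesis
    have hl'N : FreeGroup.mk l' ∈ N := by
      apply ih l' (by omega)
      rw [hl']; exact huloop
    -- the closing relator P 0 ++ invRev (P n)
    have hev0 : FreeGroup.lift (fun x : X => (x : G)) (FreeGroup.mk (P 0)) = h₀ := by
      rw [hPev 0]; simp [pathAt]
    have hevn : FreeGroup.lift (fun x : X => (x : G)) (FreeGroup.mk (P l.length)) = h₀ := by
      rw [hPev l.length]
      have h1 : w.take l.length = w := by
        apply List.take_of_length_le; omega
      have h2 : u.take l.length = u := by
        apply List.take_of_length_le; omega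
      rw [pathAt, pathAt, h1, h2, show (w.prod : G) = 1 from hprod,
        show (u.prod : G) = 1 from huloop]
      simp
    set r0 : List (X × Bool) := P 0 ++ FreeGroup.invRev (P l.length) with hr0
    have hr0mk : FreeGroup.mk r0 = FreeGroup.mk (P 0) * (FreeGroup.mk (P l.length))⁻¹ := by
      rw [FreeGroup.inv_mk, FreeGroup.mul_mk]
    have hr0N : FreeGroup.mk r0 ∈ N := by
      apply hN
      · have := hPlen 0
        have := hPlen l.length
        simp only [hr0, List.length_append, FreeGroup.invRev_length]
        omega
      · rw [hr0mk, map_mul, map_inv, hev0, hevn]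
        group
    have final : FreeGroup.mk l =
        (FreeGroup.mk l * FreeGroup.mk (P l.length) * (FreeGroup.mk l')⁻¹ *
          (FreeGroup.mk (P 0))⁻¹) *
        FreeGroup.mk r0 *
        (FreeGroup.mk (P l.length) * FreeGroup.mk l' * (FreeGroup.mk (P l.length))⁻¹) := by
      rw [hr0mk]; group
    rw [final]
    exact mul_mem (mul_mem hZ hr0N) (hNn.conj_mem _ hl'N _)

/-- If `(G,X)` has the loop shortening property with constant `k > 0`, then `G` is
finitely presented; in fact `G` admits the finite presentation `⟨X | R⟩` where `R` is
the (finite) set of all elements of the free group on `X` given by words over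
`X ∪ X⁻¹` of length at most `2k+2` which represent the identity of `G`. -/
theorem loopShortening_finitely_presented {G : Type*} [Group G] (X : Set G)
    (hfin : X.Finite) (hgen : Subgroup.closure X = ⊤) (k : ℕ) (hk : 0 < k)
    -- `(G,X)` has the loop shortening property with constant `k`:
    (hLSP : ∀ (g₀ : G) (w : List G), IsWord X w → IsLoop w → w ≠ [] →
      ∃ (h₀ : G) (u : List G), IsWord X u ∧ IsLoop u ∧ u.length < w.length ∧
        SyncFellow X k g₀ w h₀ u) :
    -- the evaluation homomorphism from the free group on `X` to `G`
    -- is surjective with kernel the normal closure of the finite relator set `R`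
    Set.Finite {r : FreeGroup X |
        FreeGroup.lift (fun x : X => (x : G)) r = 1 ∧
        ∃ l : List (X × Bool), l.length ≤ 2 * k + 2 ∧ FreeGroup.mk l = r} ∧
    Function.Surjective (FreeGroup.lift (fun x : X => (x : G))) ∧
    MonoidHom.ker (FreeGroup.lift (fun x : X => (x : G))) =
      Subgroup.normalClosure {r : FreeGroup X |
        FreeGroup.lift (fun x : X => (x : G)) r = 1 ∧
        ∃ l : List (X × Bool), l.length ≤ 2 * k + 2 ∧ FreeGroup.mk l = r} := by
  classical
  have hRfin : Set.Finite {r : FreeGroup X |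
      FreeGroup.lift (fun x : X => (x : G)) r = 1 ∧
      ∃ l : List (X × Bool), l.length ≤ 2 * k + 2 ∧ FreeGroup.mk l = r} := by
    haveI : Finite X := hfin.to_subtype
    apply Set.Finite.subset ((List.finite_length_le (X × Bool) (2 * k + 2)).image FreeGroup.mk)
    rintro r ⟨-, l, hlen, rfl⟩
    exact ⟨l, hlen, rfl⟩
  have hsurj : Function.Surjective (FreeGroup.lift (fun x : X => (x : G))) := by
    intro g
    have hg : g ∈ Subgroup.closure X := by rw [hgen]; trivial
    have hle : Subgroup.closure X ≤ (FreeGroup.lift (fun x : X => (x : G))).range := by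
      rw [Subgroup.closure_le]
      rintro x hx
      exact ⟨FreeGroup.of ⟨x, hx⟩, FreeGroup.lift_apply_of⟩
    exact hle hg
  refine ⟨hRfin, hsurj, le_antisymm ?_ ?_⟩
  · intro r hr
    have hker : FreeGroup.lift (fun x : X => (x : G)) r = 1 := hr
    have := lsp_key X hgen k hLSP
      (Subgroup.normalClosure {r : FreeGroup X |
        FreeGroup.lift (fun x : X => (x : G)) r = 1 ∧
        ∃ l : List (X × Bool), l.length ≤ 2 * k + 2 ∧ FreeGroup.mk l = r})
      Subgroup.normalClosure_normal
      (fun lr hlen hev => Subgroup.subset_normalClosure ⟨hev, lr, hlen, rfl⟩)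
      r.toWord.length r.toWord le_rfl
      (by rw [← lsp_ev_mk, FreeGroup.mk_toWord]; exact hker)
    rwa [FreeGroup.mk_toWord] at this
  · apply Subgroup.normalClosure_le_normal
    rintro r ⟨h1, -⟩
    exact h1


end LoopShortening
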